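/- Let X be a real Banach space, Φ : X → ℝ ∪ {+∞} proper, lsc, convex, x̄ ∈ dom Φ. Suppose (x_n) ⊂ X, μ_n ≥ 0, x_n* ∈ ∂Φ(x_n) satisfy μ_n(Φ(x_n) − Φ(x̄)) → 0, ⟨μ_n x_n*, x_n − x̄⟩ → 0, and μ_n x_n* ⇀ x* weakly*. Then x* ∈ N_{[Φ ≤ Φ(x̄)]}(x̄), i.e., ⟨x*, y − x̄⟩ ≤ 0 for every y with Φ(y) ≤ Φ(x̄). -/

import Mathlib

open Set Topology Filter

theorem stmt16 {X : Type*} [NormedAddCommGroup X] [NormedSpace ℝ X] [CompleteSpace X]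
    (Φ : X → EReal)
    (hproper : ∃ z, Φ z ≠ ⊤) (hbot : ∀ z, Φ z ≠ ⊥)
    (hconv : ∀ x y : X, ∀ t : ℝ, 0 ≤ t → t ≤ 1 →
      Φ (t • x + (1 - t) • y) ≤ ((t : ℝ) : EReal) * Φ x + (((1 - t : ℝ)) : EReal) * Φ y)
    (hlsc : LowerSemicontinuous Φ)
    (xb : X) (c : ℝ) (hc : Φ xb = (c : EReal))
    (xs : ℕ → X) (μs : ℕ → ℝ) (hμs : ∀ n, 0 ≤ μs n)
    (ps : ℕ → X →L[ℝ] ℝ)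
    (hsub : ∀ n, ∀ u : X, Φ (xs n) + ((ps n (u - xs n) : ℝ) : EReal) ≤ Φ u)
    (hval : Tendsto (fun n => ((μs n : ℝ) : EReal) * (Φ (xs n) - Φ xb)) atTop
      (nhds (0 : EReal)))
    (hpair : Tendsto (fun n => μs n * ps n (xs n - xb)) atTop (nhds (0 : ℝ)))
    (p : X →L[ℝ] ℝ)
    (hweak : ∀ u : X, Tendsto (fun n => μs n * ps n u) atTop (nhds (p u))) :
    ∀ y : X, Φ y ≤ Φ xb → p (y - xb) ≤ 0 := by
  intro y hy
  -- Φ (xs n) is finite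
  have hfin : ∀ n, Φ (xs n) = ((Φ (xs n)).toReal : EReal) := by
    intro n
    have h := hsub n xb
    rw [hc] at h
    have hne : Φ (xs n) ≠ ⊤ := by
      intro htop
      rw [htop, EReal.top_add_coe] at h
      exact (not_le.mpr (EReal.coe_lt_top c)) h
    exact (EReal.coe_toReal hne (hbot _)).symm
  set a : ℕ → ℝ := fun n => (Φ (xs n)).toReal with ha
  -- real form of hval
  have hval' : Tendsto (fun n => μs n * (a n - c)) atTop (nhds (0 : ℝ)) := by
    rw [← EReal.tendsto_coe]
    convert hval using 2 with n
    rw [hfin n, hc]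
    push_cast
    · rfl
    · simp
  -- key inequality
  have hkey : ∀ n, μs n * ps n (y - xb) ≤ μs n * (c - a n) + μs n * ps n (xs n - xb) := by
    intro n
    have h := hsub n y
    have hyc : Φ y ≤ (c : EReal) := hc ▸ hy
    rw [hfin n] at h
    have h2 : (↑(a n + ps n (y - xs n)) : EReal) ≤ (c : EReal) := by
      push_cast
      exact h.trans hyc
    have h3 : a n + ps n (y - xs n) ≤ c := EReal.coe_le_coe_iff.mp h2
    have hsplit : ps n (y - xs n) = ps n (y - xb) - ps n (xs n - xb) := by
      rw [← (ps n).map_sub]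
      congr 1
      abel
    have h4 : ps n (y - xb) ≤ (c - a n) + ps n (xs n - xb) := by
      rw [hsplit] at h3; linarith
    have := mul_le_mul_of_nonneg_left h4 (hμs n)
    linarith [this]
  have hlim : Tendsto (fun n => μs n * (c - a n) + μs n * ps n (xs n - xb)) atTop
      (nhds (0 : ℝ)) := by
    have h1 : Tendsto (fun n => μs n * (c - a n)) atTop (nhds (0 : ℝ)) := by
      have := hval'.neg
      simp only [neg_zero] at this
      convert this using 2 with n
      ring
    have := h1.add hpair
    simpa using this
  exact le_of_tendsto_of_tendsto' (hweak (y - xb)) hlim hkey
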